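/- Let q = 2^d, n = q - 1, ψ the canonical additive character of F_q (ψ(y) = (−1)^{Tr(y)}), θ a primitive element of F_q, and χ the multiplicative character of order n with χ(θ^j) = e^{2πij/n}. Define the Gauss sums Y(k) = ∑_{x∈F_q^*} ψ(x) χ^k(x) and set L(a,b,c) = (1/n^3) ∑_{k∈ℤ/nℤ} Y(k) Y(k+a) conj(Y(k+b)) conj(Y(k+c)). Then L(a,b,c) = δ_b δ_{a−c} + (1/n^2) Y(a−c) Y(−b) ∑_{v∈F_q^*, v≠1} χ(v^{−c}(v+1)^{b+c−a}), where δ_0 = 1 and δ_u = 0 for u ≠ 0. -/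

import Mathlib

open Complex Real Finset

lemma pow_mod_of_pow_eq_one {t : ℂ} {n : ℕ} (ht : t ^ n = 1) (m : ℕ) :
    t ^ (m % n) = t ^ m := by
  conv_rhs => rw [← Nat.div_add_mod m n]
  rw [pow_add, pow_mul, ht, one_pow, one_mul]

lemma pow_val_add' {n : ℕ} [NeZero n] {t : ℂ} (ht : t ^ n = 1) (s u : ZMod n) :
    t ^ (s + u).val = t ^ s.val * t ^ u.val := by
  rw [ZMod.val_add, pow_mod_of_pow_eq_one ht, pow_add]

lemma sum_range_pow_eq {n : ℕ} {t : ℂ} (ht : t ^ n = 1) :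
    ∑ j ∈ Finset.range n, t ^ j = if t = 1 then (n : ℂ) else 0 := by
  split_ifs with h
  · simp [h]
  · rw [geom_sum_eq h, ht, sub_self, zero_div]

lemma zmod_sum_val {n : ℕ} [NeZero n] (f : ℕ → ℂ) :
    ∑ k : ZMod n, f (ZMod.val k) = ∑ j ∈ Finset.range n, f j := by
  apply Finset.sum_nbij' (i := fun k : ZMod n => k.val) (j := fun j : ℕ => (j : ZMod n))
  · intro a _; exact Finset.mem_range.mpr (ZMod.val_lt a)
  · intro a _; exact Finset.mem_univ _
  · intro a _; simp [ZMod.natCast_val, ZMod.cast_id]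
  · intro a ha; exact ZMod.val_cast_of_lt (Finset.mem_range.mp ha)
  · intro a _; rfl

lemma sum4 {α : Type} (s : Finset α) (f g h i : α → ℂ) :
    (∑ x ∈ s, f x) * (∑ x ∈ s, g x) * (∑ x ∈ s, h x) * (∑ x ∈ s, i x)
    = ∑ x ∈ s, ∑ y ∈ s, ∑ z ∈ s, ∑ w ∈ s, f x * g y * h z * i w := by
  calc (∑ x ∈ s, f x) * (∑ x ∈ s, g x) * (∑ x ∈ s, h x) * (∑ x ∈ s, i x)
      = ((∑ x ∈ s, f x) * (∑ x ∈ s, g x)) * ((∑ x ∈ s, h x) * (∑ x ∈ s, i x)) := by ring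
    _ = (∑ x ∈ s, ∑ y ∈ s, f x * g y) * (∑ z ∈ s, ∑ w ∈ s, h z * i w) := by
        rw [Finset.sum_mul_sum, Finset.sum_mul_sum]
    _ = ∑ x ∈ s, ∑ z ∈ s, ∑ y ∈ s, ∑ w ∈ s, f x * g y * h z * i w := by
        rw [Finset.sum_mul_sum]
        refine Finset.sum_congr rfl fun x _ => Finset.sum_congr rfl fun z _ => ?_
        rw [Finset.sum_mul_sum]
        exact Finset.sum_congr rfl fun y _ => Finset.sum_congr rfl fun w _ => by ring
    _ = ∑ x ∈ s, ∑ y ∈ s, ∑ z ∈ s, ∑ w ∈ s, f x * g y * h z * i w :=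
        Finset.sum_congr rfl fun x _ => Finset.sum_comm

theorem gauss_sum_L_identity (d : ℕ) (hd : 0 < d) (n : ℕ) (hn : n = 2 ^ d - 1)
    [NeZero n]
    (F : Type) [Field F] [Fintype F] [DecidableEq F] [Algebra (ZMod 2) F]
    (hF : Fintype.card F = 2 ^ d)
    (ψ : F → ℂ)
    (hψ : ∀ y : F, ψ y = (-1 : ℂ) ^ ((Algebra.trace (ZMod 2) F y).val))
    (θ : F) (hθ : ∀ x : F, x ≠ 0 → ∃ j : ℕ, x = θ ^ j)
    (χ : F → ℂ) (hχ0 : χ 0 = 0)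
    (hχ : ∀ j : ℕ, χ (θ ^ j) = Complex.exp (2 * Real.pi * Complex.I * j / n))
    (Y : ZMod n → ℂ)
    (hY : ∀ k : ZMod n, Y k = ∑ x ∈ Finset.univ.filter (fun x : F => x ≠ 0),
        ψ x * (χ x) ^ k.val)
    (L : ZMod n → ZMod n → ZMod n → ℂ)
    (hL : ∀ a b c : ZMod n, L a b c = (1 / (n : ℂ) ^ 3) *
        ∑ k : ZMod n, Y k * Y (k + a) * (starRingEnd ℂ) (Y (k + b)) *
          (starRingEnd ℂ) (Y (k + c))) :
    ∀ a b c : ZMod n,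
      L a b c = (if b = 0 then 1 else 0) * (if a - c = 0 then 1 else 0) +
        (1 / (n : ℂ) ^ 2) * Y (a - c) * Y (-b) *
          ∑ v ∈ Finset.univ.filter (fun v : F => v ≠ 0 ∧ v ≠ 1),
            χ (v ^ (-c : ZMod n).val * (v + 1) ^ (b + c - a : ZMod n).val) := by
  -- basic numerics
  have hnpos : 0 < n := Nat.pos_of_ne_zero (NeZero.ne n)
  have hnC : (n : ℂ) ≠ 0 := Nat.cast_ne_zero.mpr (NeZero.ne n)
  have hcard : Fintype.card F = n + 1 := by
    rw [hF, hn]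
    have : 1 ≤ 2 ^ d := Nat.one_le_two_pow
    omega
  -- char 2
  have h2 : (2 : F) = 0 := by
    have h20 : (2 : ZMod 2) = 0 := by decide
    calc (2 : F) = algebraMap (ZMod 2) F (2 : ZMod 2) := by rw [map_ofNat]
    _ = 0 := by rw [h20, map_zero]
  have haddself : ∀ x : F, x + x = 0 := by
    intro x
    have : (2 : F) * x = 0 := by rw [h2, zero_mul]
    calc x + x = 2 * x := by ring
    _ = 0 := this
  -- θ ≠ 0
  have hθ0 : θ ≠ 0 := by
    intro h
    have h1 := hχ 1
    rw [pow_one, h, hχ0] at h1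
    exact (Complex.exp_ne_zero _) h1.symm
  have hθn : θ ^ n = 1 := by
    have := FiniteField.pow_card_sub_one_eq_one θ hθ0
    rwa [hcard, Nat.add_sub_cancel] at this
  -- ψ facts
  have hψ0 : ψ 0 = 1 := by rw [hψ, map_zero, ZMod.val_zero, pow_zero]
  have hψmul : ∀ x y : F, ψ x * ψ y = ψ (x + y) := by
    intro x y
    rw [hψ, hψ, hψ, map_add, ZMod.val_add,
      pow_mod_of_pow_eq_one (by norm_num : (-1 : ℂ) ^ 2 = 1), pow_add]
  have hψconj : ∀ x : F, (starRingEnd ℂ) (ψ x) = ψ x := by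
    intro x
    rw [hψ, map_pow, map_neg, map_one]
  -- χ facts
  have hχne : ∀ x : F, x ≠ 0 → χ x ≠ 0 := by
    intro x hx
    obtain ⟨j, rfl⟩ := hθ x hx
    rw [hχ]
    exact Complex.exp_ne_zero _
  have hχmul : ∀ x y : F, x ≠ 0 → y ≠ 0 → χ (x * y) = χ x * χ y := by
    intro x y hx hy
    obtain ⟨i, rfl⟩ := hθ x hx
    obtain ⟨j, rfl⟩ := hθ y hy
    rw [← pow_add, hχ, hχ, hχ, ← Complex.exp_add]
    congr 1
    push_cast
    ring
  have hχn : ∀ x : F, x ≠ 0 → χ x ^ n = 1 := by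
    intro x hx
    obtain ⟨j, rfl⟩ := hθ x hx
    rw [hχ, ← Complex.exp_nat_mul]
    have : (n : ℂ) * (2 * ↑π * I * ↑j / ↑n) = (j : ℂ) * (2 * ↑π * I) := by
      field_simp
    rw [this, Complex.exp_nat_mul_two_pi_mul_I]
  have hχ1 : χ 1 = 1 := by
    have := hχ 0
    rw [pow_zero] at this
    rw [this]
    simp
  have hχinv : ∀ x : F, x ≠ 0 → χ x⁻¹ = (χ x)⁻¹ := by
    intro x hx
    have h1 : χ (x⁻¹ * x) = χ x⁻¹ * χ x := hχmul _ _ (inv_ne_zero hx) hx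
    rw [inv_mul_cancel₀ hx, hχ1] at h1
    exact eq_inv_of_mul_eq_one_left h1.symm
  have hχconj : ∀ x : F, x ≠ 0 → (starRingEnd ℂ) (χ x) = χ x⁻¹ := by
    intro x hx
    obtain ⟨j, rfl⟩ := hθ x hx
    rw [hχinv _ hx, hχ, ← Complex.exp_conj, ← Complex.exp_neg]
    congr 1
    rw [map_div₀, map_mul, map_mul, map_mul, Complex.conj_I, map_ofNat,
      Complex.conj_ofReal, map_natCast, map_natCast]
    ring
  have hχpow : ∀ (x : F), x ≠ 0 → ∀ m : ℕ, χ (x ^ m) = χ x ^ m := by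
    intro x hx m
    induction m with
    | zero => simpa using hχ1
    | succ m ih =>
      rw [pow_succ, pow_succ, hχmul _ _ (pow_ne_zero m hx) hx, ih]
  set Fs : Finset F := Finset.univ.filter (fun x : F => x ≠ 0) with hFs
  have hmemFs : ∀ x : F, x ∈ Fs ↔ x ≠ 0 := by
    intro x; simp [hFs]
  have hcardFs : Fs.card = n := by
    have : Fs = Finset.univ.erase 0 := by
      ext x; simp [hFs, eq_comm, Ne]
    rw [this, Finset.card_erase_of_mem (Finset.mem_univ 0), Finset.card_univ, hcard]
    omega
  have himage : (Finset.range n).image (fun j => θ ^ j) = Fs := by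
    apply Finset.Subset.antisymm
    · intro x hx
      simp only [Finset.mem_image] at hx
      obtain ⟨j, _, rfl⟩ := hx
      exact (hmemFs _).mpr (pow_ne_zero _ hθ0)
    · intro x hx
      obtain ⟨j, rfl⟩ := hθ x ((hmemFs _).mp hx)
      simp only [Finset.mem_image]
      refine ⟨j % n, Finset.mem_range.mpr (Nat.mod_lt _ hnpos), ?_⟩
      conv_rhs => rw [← Nat.div_add_mod j n]
      rw [pow_add, pow_mul, hθn, one_pow, one_mul]
  have hinjOn : Set.InjOn (fun j => θ ^ j) (Finset.range n) := by
    apply Finset.card_image_iff.mp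
    rw [himage, hcardFs, Finset.card_range]
  have hθinj : ∀ i j : ℕ, i < n → j < n → θ ^ i = θ ^ j → i = j := by
    intro i j hi hj hij
    exact hinjOn (by simpa using hi) (by simpa using hj) hij
  have hreindex : ∀ g : F → ℂ, ∑ x ∈ Fs, g x = ∑ j ∈ Finset.range n, g (θ ^ j) := by
    intro g
    rw [← himage, Finset.sum_image (fun i hi j hj h => hinjOn (by simpa using hi) (by simpa using hj) h)]
  have hswap : ∀ i m : ℕ, χ (θ ^ i) ^ m = χ (θ ^ m) ^ i := by
    intro i m
    rw [hχ, hχ, ← Complex.exp_nat_mul, ← Complex.exp_nat_mul]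
    congr 1
    ring
  have hχeq1 : ∀ x : F, x ≠ 0 → χ x = 1 → x = 1 := by
    intro x hx h1
    obtain ⟨j, rfl⟩ := hθ x hx
    have hj : θ ^ j = θ ^ (j % n) := by
      conv_lhs => rw [← Nat.div_add_mod j n]
      rw [pow_add, pow_mul, hθn, one_pow, one_mul]
    rw [hj, hχ] at h1
    obtain ⟨k, hk⟩ := Complex.exp_eq_one_iff.mp h1
    have h2pi : (2 : ℂ) * ↑π * I ≠ 0 := by
      simp [Real.pi_ne_zero, Complex.I_ne_zero]
    have hmn : ((j % n : ℕ) : ℂ) = (k : ℂ) * n := by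
      field_simp at hk
      exact mul_left_cancel₀ h2pi (by rw [hk]; ring)
    have hdvd : (n : ℤ) ∣ (j % n : ℕ) := by
      refine ⟨k, ?_⟩
      apply Int.cast_injective (α := ℂ)
      rw [Int.cast_mul, Int.cast_natCast, Int.cast_natCast, hmn]
      ring
    have : j % n = 0 := Nat.eq_zero_of_dvd_of_lt (Int.natCast_dvd_natCast.mp hdvd) (Nat.mod_lt _ hnpos)
    rw [hj, this, pow_zero]
  have horth : ∀ m : ZMod n, ∑ x ∈ Fs, χ x ^ m.val = if m = 0 then (n : ℂ) else 0 := by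
    intro m
    rw [hreindex]
    have : ∀ j ∈ Finset.range n, χ (θ ^ j) ^ m.val = χ (θ ^ m.val) ^ j :=
      fun j _ => hswap j m.val
    rw [Finset.sum_congr rfl this, sum_range_pow_eq (hχn _ (pow_ne_zero _ hθ0))]
    congr 1
    simp only [eq_iff_iff]
    constructor
    · intro h
      have := hχeq1 _ (pow_ne_zero _ hθ0) h
      have hv : m.val = 0 := by
        apply hθinj m.val 0 (ZMod.val_lt m) hnpos
        simpa using this
      exact (ZMod.val_eq_zero m).mp hv
    · intro h
      rw [h, ZMod.val_zero, pow_zero, hχ1]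
  -- more machinery
  have hsumk : ∀ t : ℂ, t ^ n = 1 → ∑ k : ZMod n, t ^ (ZMod.val k) = if t = 1 then (n : ℂ) else 0 := by
    intro t ht
    rw [zmod_sum_val (fun m => t ^ m), sum_range_pow_eq ht]
  have hEinv : ∀ x : F, x ≠ 0 → ∀ m : ZMod n, χ x⁻¹ ^ m.val = χ x ^ (-m).val := by
    intro x hx m
    have h := pow_val_add' (hχn x hx) (-m) m
    rw [neg_add_cancel, ZMod.val_zero, pow_zero] at h
    rw [hχinv _ hx, inv_pow]
    exact (eq_inv_of_mul_eq_one_left h.symm).symm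
  have hmulreindex : ∀ t : F, t ≠ 0 → ∀ g : F → ℂ, ∑ z ∈ Fs, g z = ∑ u ∈ Fs, g (t * u) := by
    intro t ht g
    apply Finset.sum_nbij' (i := fun z : F => t⁻¹ * z) (j := fun u : F => t * u)
    · intro z hz
      exact (hmemFs _).mpr (mul_ne_zero (inv_ne_zero ht) ((hmemFs _).mp hz))
    · intro u hu
      exact (hmemFs _).mpr (mul_ne_zero ht ((hmemFs _).mp hu))
    · intro z _; field_simp
    · intro u _; field_simp
    · intro z _
      rw [mul_inv_cancel_left₀ ht]
  have h1Fs : (1 : F) ∈ Fs := (hmemFs _).mpr one_ne_zero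
  intro a b c
  rw [hL a b c]
  have conjY : ∀ m : ZMod n, (starRingEnd ℂ) (Y m) = ∑ z ∈ Fs, ψ z * χ z⁻¹ ^ m.val := by
    intro m
    rw [hY, map_sum]
    refine Finset.sum_congr rfl fun z hz => ?_
    rw [map_mul, hψconj, map_pow, hχconj _ ((hmemFs z).mp hz)]
  -- Step 1: expand the product of four sums into a quadruple sum
  have step1 : ∀ k : ZMod n, Y k * Y (k + a) * (starRingEnd ℂ) (Y (k + b)) * (starRingEnd ℂ) (Y (k + c))
      = ∑ x ∈ Fs, ∑ y ∈ Fs, ∑ z ∈ Fs, ∑ w ∈ Fs,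
          ψ x * χ x ^ (ZMod.val k) * (ψ y * χ y ^ ZMod.val (k + a)) *
          (ψ z * χ z⁻¹ ^ ZMod.val (k + b)) * (ψ w * χ w⁻¹ ^ ZMod.val (k + c)) := by
    intro k
    rw [hY k, hY (k + a), conjY (k + b), conjY (k + c),
      sum4 Fs (fun x => ψ x * χ x ^ (ZMod.val k)) (fun y => ψ y * χ y ^ ZMod.val (k + a))
        (fun z => ψ z * χ z⁻¹ ^ ZMod.val (k + b)) (fun w => ψ w * χ w⁻¹ ^ ZMod.val (k + c))]
  -- Step 2: collapse the k-sum
  have hkcol : ∀ x, x ≠ 0 → ∀ y, y ≠ 0 → ∀ z, z ≠ 0 → ∀ w, w ≠ 0 →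
      (∑ k : ZMod n, ψ x * χ x ^ (ZMod.val k) * (ψ y * χ y ^ ZMod.val (k + a)) *
        (ψ z * χ z⁻¹ ^ ZMod.val (k + b)) * (ψ w * χ w⁻¹ ^ ZMod.val (k + c)))
      = ψ x * ψ y * ψ z * ψ w * χ y ^ a.val * χ z⁻¹ ^ b.val * χ w⁻¹ ^ c.val *
          (if x * y * z⁻¹ * w⁻¹ = 1 then (n : ℂ) else 0) := by
    intro x hx0 y hy0 z hz0 w hw0
    have hzi : z⁻¹ ≠ 0 := inv_ne_zero hz0
    have hwi : w⁻¹ ≠ 0 := inv_ne_zero hw0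
    have hp0 : x * y * z⁻¹ * w⁻¹ ≠ 0 := mul_ne_zero (mul_ne_zero (mul_ne_zero hx0 hy0) hzi) hwi
    have hcond : (if x * y * z⁻¹ * w⁻¹ = 1 then (n : ℂ) else 0)
        = ∑ k : ZMod n, χ (x * y * z⁻¹ * w⁻¹) ^ (ZMod.val k) := by
      rw [hsumk _ (hχn _ hp0)]
      exact (if_congr ⟨hχeq1 _ hp0, fun h => by rw [h, hχ1]⟩ rfl rfl).symm
    rw [hcond, Finset.mul_sum]
    refine Finset.sum_congr rfl fun k _ => ?_
    rw [pow_val_add' (hχn y hy0) k a, pow_val_add' (hχn z⁻¹ hzi) k b,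
      pow_val_add' (hχn w⁻¹ hwi) k c,
      hχmul (x * y * z⁻¹) w⁻¹ (mul_ne_zero (mul_ne_zero hx0 hy0) hzi) hwi,
      hχmul (x * y) z⁻¹ (mul_ne_zero hx0 hy0) hzi, hχmul x y hx0 hy0,
      mul_pow, mul_pow, mul_pow]
    ring
  -- Step 3: collapse the w-sum
  have hwcol : ∀ x, x ≠ 0 → ∀ y, y ≠ 0 → ∀ z, z ≠ 0 →
      (∑ w ∈ Fs, ψ x * ψ y * ψ z * ψ w * χ y ^ a.val * χ z⁻¹ ^ b.val * χ w⁻¹ ^ c.val *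
        (if x * y * z⁻¹ * w⁻¹ = 1 then (n : ℂ) else 0))
      = ψ x * ψ y * ψ z * ψ (x * y * z⁻¹) * χ y ^ a.val * χ z⁻¹ ^ b.val *
          χ (x * y * z⁻¹)⁻¹ ^ c.val * n := by
    intro x hx0 y hy0 z hz0
    have ht0 : x * y * z⁻¹ ≠ 0 := mul_ne_zero (mul_ne_zero hx0 hy0) (inv_ne_zero hz0)
    have hcondeq : ∀ w : F, w ≠ 0 → (x * y * z⁻¹ * w⁻¹ = 1 ↔ w = x * y * z⁻¹) := by
      intro w hw
      rw [← div_eq_mul_inv, div_eq_one_iff_eq hw, eq_comm]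
    have : ∀ w ∈ Fs, ψ x * ψ y * ψ z * ψ w * χ y ^ a.val * χ z⁻¹ ^ b.val * χ w⁻¹ ^ c.val *
        (if x * y * z⁻¹ * w⁻¹ = 1 then (n : ℂ) else 0)
        = (if w = x * y * z⁻¹ then
            ψ x * ψ y * ψ z * ψ w * χ y ^ a.val * χ z⁻¹ ^ b.val * χ w⁻¹ ^ c.val * n else 0) := by
      intro w hw
      have hw0 := (hmemFs w).mp hw
      by_cases h : w = x * y * z⁻¹
      · rw [if_pos ((hcondeq w hw0).mpr h), if_pos h]
      · rw [if_neg (fun hc => h ((hcondeq w hw0).mp hc)), if_neg h, mul_zero]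
    rw [Finset.sum_congr rfl this, Finset.sum_ite_eq' Fs (x * y * z⁻¹), if_pos ((hmemFs _).mpr ht0)]
  -- Step 4: full collapse to a triple sum
  have hS3 : (∑ k : ZMod n, Y k * Y (k + a) * (starRingEnd ℂ) (Y (k + b)) * (starRingEnd ℂ) (Y (k + c)))
      = ∑ x ∈ Fs, ∑ y ∈ Fs, ∑ z ∈ Fs,
          ψ x * ψ y * ψ z * ψ (x * y * z⁻¹) * χ y ^ a.val * χ z⁻¹ ^ b.val *
            χ (x * y * z⁻¹)⁻¹ ^ c.val * n := by
    rw [Finset.sum_congr rfl (fun k _ => step1 k), Finset.sum_comm]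
    refine Finset.sum_congr rfl fun x hx => ?_
    rw [Finset.sum_comm]
    refine Finset.sum_congr rfl fun y hy => ?_
    rw [Finset.sum_comm]
    refine Finset.sum_congr rfl fun z hz => ?_
    rw [Finset.sum_comm,
      Finset.sum_congr rfl (fun w hw => hkcol x ((hmemFs x).mp hx) y ((hmemFs y).mp hy)
        z ((hmemFs z).mp hz) w ((hmemFs w).mp hw))]
    exact hwcol x ((hmemFs x).mp hx) y ((hmemFs y).mp hy) z ((hmemFs z).mp hz)
  -- Step 5: reindex z = x * u and factor
  have hS4 : (∑ x ∈ Fs, ∑ y ∈ Fs, ∑ z ∈ Fs,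
          ψ x * ψ y * ψ z * ψ (x * y * z⁻¹) * χ y ^ a.val * χ z⁻¹ ^ b.val *
            χ (x * y * z⁻¹)⁻¹ ^ c.val * n)
      = ∑ u ∈ Fs, (n : ℂ) * (χ u⁻¹ ^ b.val * χ u ^ c.val) *
          ((∑ x ∈ Fs, ψ (x * (1 + u)) * χ x⁻¹ ^ b.val) *
           (∑ y ∈ Fs, ψ (y * (1 + u⁻¹)) * χ y ^ (a - c).val)) := by
    have hz : ∀ x ∈ Fs, ∀ y ∈ Fs,
        (∑ z ∈ Fs, ψ x * ψ y * ψ z * ψ (x * y * z⁻¹) * χ y ^ a.val * χ z⁻¹ ^ b.val *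
            χ (x * y * z⁻¹)⁻¹ ^ c.val * n)
        = ∑ u ∈ Fs, (n : ℂ) * (χ u⁻¹ ^ b.val * χ u ^ c.val) *
            ((ψ (x * (1 + u)) * χ x⁻¹ ^ b.val) * (ψ (y * (1 + u⁻¹)) * χ y ^ (a - c).val)) := by
      intro x hx y hy
      have hx0 := (hmemFs x).mp hx
      have hy0 := (hmemFs y).mp hy
      rw [hmulreindex x hx0 (fun z => ψ x * ψ y * ψ z * ψ (x * y * z⁻¹) * χ y ^ a.val *
        χ z⁻¹ ^ b.val * χ (x * y * z⁻¹)⁻¹ ^ c.val * n)]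
      refine Finset.sum_congr rfl fun u hu => ?_
      have hu0 := (hmemFs u).mp hu
      have e1 : x * y * (x * u)⁻¹ = y * u⁻¹ := by
        field_simp
      have e2 : ψ x * ψ (x * u) = ψ (x * (1 + u)) := by
        rw [hψmul, show x + x * u = x * (1 + u) by ring]
      have e3 : ψ y * ψ (y * u⁻¹) = ψ (y * (1 + u⁻¹)) := by
        rw [hψmul, show y + y * u⁻¹ = y * (1 + u⁻¹) by ring]
      have e4 : χ (x * u)⁻¹ ^ b.val = χ x⁻¹ ^ b.val * χ u⁻¹ ^ b.val := by
        rw [mul_inv, hχmul _ _ (inv_ne_zero hx0) (inv_ne_zero hu0), mul_pow]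
      have e5 : χ y ^ a.val * χ (y * u⁻¹)⁻¹ ^ c.val = χ y ^ (a - c).val * χ u ^ c.val := by
        rw [mul_inv, inv_inv, hχmul _ _ (inv_ne_zero hy0) hu0, mul_pow, ← mul_assoc,
          hEinv y hy0 c, ← pow_val_add' (hχn y hy0), ← sub_eq_add_neg]
      calc ψ x * ψ y * ψ (x * u) * ψ (x * y * (x * u)⁻¹) * χ y ^ a.val * χ (x * u)⁻¹ ^ b.val *
            χ (x * y * (x * u)⁻¹)⁻¹ ^ c.val * n
          = (ψ x * ψ (x * u)) * (ψ y * ψ (y * u⁻¹)) *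
              (χ y ^ a.val * χ (y * u⁻¹)⁻¹ ^ c.val) * χ (x * u)⁻¹ ^ b.val * n := by
            rw [e1]; ring
        _ = (n : ℂ) * (χ u⁻¹ ^ b.val * χ u ^ c.val) *
            ((ψ (x * (1 + u)) * χ x⁻¹ ^ b.val) * (ψ (y * (1 + u⁻¹)) * χ y ^ (a - c).val)) := by
            rw [e2, e3, e4, e5]; ring
    rw [Finset.sum_congr rfl (fun x hx => Finset.sum_congr rfl (fun y hy => hz x hx y hy))]
    -- swap sums: ∑x∑y∑u → ∑u∑x∑y
    rw [Finset.sum_congr rfl (fun x (_ : x ∈ Fs) => Finset.sum_comm), Finset.sum_comm]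
    refine Finset.sum_congr rfl fun u hu => ?_
    rw [Finset.sum_mul_sum, Finset.mul_sum]
    refine Finset.sum_congr rfl fun x _ => ?_
    rw [Finset.mul_sum]
  -- neg one is one
  have hm1 : (-1 : F) = 1 := neg_eq_of_add_eq_zero_left (haddself 1)
  have h1add : ∀ u : F, u ≠ 1 → (1 : F) + u ≠ 0 := by
    intro u hu1 h
    apply hu1
    have : u = -1 := eq_neg_of_add_eq_zero_right h
    rw [this, hm1]
  -- value at u = 1
  have hA1 : (∑ x ∈ Fs, ψ (x * (1 + 1)) * χ x⁻¹ ^ b.val) = if b = 0 then (n : ℂ) else 0 := by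
    rw [show ((1 : F) + 1) = 0 from haddself 1]
    have : ∀ x ∈ Fs, ψ (x * 0) * χ x⁻¹ ^ b.val = χ x ^ (-b).val := by
      intro x hx
      rw [mul_zero, hψ0, one_mul, hEinv x ((hmemFs x).mp hx)]
    rw [Finset.sum_congr rfl this, horth]
    exact if_congr neg_eq_zero rfl rfl
  have hB1 : (∑ y ∈ Fs, ψ (y * (1 + 1⁻¹)) * χ y ^ (a - c).val) = if a - c = 0 then (n : ℂ) else 0 := by
    rw [inv_one, show ((1 : F) + 1) = 0 from haddself 1]
    have : ∀ y ∈ Fs, ψ (y * 0) * χ y ^ (a - c).val = χ y ^ (a - c).val := by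
      intro y hy
      rw [mul_zero, hψ0, one_mul]
    rw [Finset.sum_congr rfl this, horth]
  -- values for u ≠ 1
  have hAu : ∀ u : F, u ≠ 0 → u ≠ 1 →
      (∑ x ∈ Fs, ψ (x * (1 + u)) * χ x⁻¹ ^ b.val) = χ (1 + u) ^ b.val * Y (-b) := by
    intro u hu0 hu1
    have h10 : (1 : F) + u ≠ 0 := h1add u hu1
    rw [hmulreindex (1 + u)⁻¹ (inv_ne_zero h10) (fun x => ψ (x * (1 + u)) * χ x⁻¹ ^ b.val)]
    have : ∀ x ∈ Fs, ψ ((1 + u)⁻¹ * x * (1 + u)) * χ ((1 + u)⁻¹ * x)⁻¹ ^ b.val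
        = χ (1 + u) ^ b.val * (ψ x * χ x ^ (-b).val) := by
      intro x hx
      have hx0 := (hmemFs x).mp hx
      have ea : (1 + u)⁻¹ * x * (1 + u) = x := by
        rw [mul_comm, ← mul_assoc, mul_inv_cancel₀ h10, one_mul]
      have eb : χ ((1 + u)⁻¹ * x)⁻¹ ^ b.val = χ (1 + u) ^ b.val * χ x⁻¹ ^ b.val := by
        rw [mul_inv, inv_inv, hχmul _ _ h10 (inv_ne_zero hx0), mul_pow]
      rw [ea, eb, hEinv x hx0]
      ring
    rw [Finset.sum_congr rfl this, ← Finset.mul_sum, hY]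
  have hBu : ∀ u : F, u ≠ 0 → u ≠ 1 →
      (∑ y ∈ Fs, ψ (y * (1 + u⁻¹)) * χ y ^ (a - c).val)
        = χ ((1 + u⁻¹)⁻¹) ^ (a - c).val * Y (a - c) := by
    intro u hu0 hu1
    have hui1 : u⁻¹ ≠ 1 := fun h => hu1 (by rw [← inv_inv u, h, inv_one])
    have h10 : (1 : F) + u⁻¹ ≠ 0 := h1add u⁻¹ hui1
    rw [hmulreindex (1 + u⁻¹)⁻¹ (inv_ne_zero h10) (fun y => ψ (y * (1 + u⁻¹)) * χ y ^ (a - c).val)]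
    have : ∀ y ∈ Fs, ψ ((1 + u⁻¹)⁻¹ * y * (1 + u⁻¹)) * χ ((1 + u⁻¹)⁻¹ * y) ^ (a - c).val
        = χ ((1 + u⁻¹)⁻¹) ^ (a - c).val * (ψ y * χ y ^ (a - c).val) := by
      intro y hy
      have hy0 := (hmemFs y).mp hy
      have ea : (1 + u⁻¹)⁻¹ * y * (1 + u⁻¹) = y := by
        rw [mul_comm, ← mul_assoc, mul_inv_cancel₀ h10, one_mul]
      have eb : χ ((1 + u⁻¹)⁻¹ * y) ^ (a - c).val
          = χ ((1 + u⁻¹)⁻¹) ^ (a - c).val * χ y ^ (a - c).val := by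
        rw [hχmul _ _ (inv_ne_zero h10) hy0, mul_pow]
      rw [ea, eb]
      ring
    rw [Finset.sum_congr rfl this, ← Finset.mul_sum, hY]
  -- split off u = 1 and compute the rest
  set Fs' : Finset F := Fs.erase 1 with hFs'def
  have hFs' : Finset.univ.filter (fun v : F => v ≠ 0 ∧ v ≠ 1) = Fs' := by
    ext v
    simp [hFs'def, hFs, Finset.mem_erase, and_comm]
  have hmemFs' : ∀ v : F, v ∈ Fs' ↔ v ≠ 0 ∧ v ≠ 1 := by
    intro v
    rw [← hFs']
    simp
  have hsplit : (∑ u ∈ Fs, (n : ℂ) * (χ u⁻¹ ^ b.val * χ u ^ c.val) *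
          ((∑ x ∈ Fs, ψ (x * (1 + u)) * χ x⁻¹ ^ b.val) *
           (∑ y ∈ Fs, ψ (y * (1 + u⁻¹)) * χ y ^ (a - c).val)))
      = (n : ℂ) * ((if b = 0 then (n : ℂ) else 0) * (if a - c = 0 then (n : ℂ) else 0)) +
        ∑ u ∈ Fs', (n : ℂ) * (χ u⁻¹ ^ b.val * χ u ^ c.val) *
          ((χ (1 + u) ^ b.val * Y (-b)) * (χ ((1 + u⁻¹)⁻¹) ^ (a - c).val * Y (a - c))) := by
    rw [← Finset.add_sum_erase Fs _ h1Fs]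
    congr 1
    · rw [hA1, hB1, inv_one, hχ1, one_pow, one_pow, one_mul, mul_one]
    · refine Finset.sum_congr rfl fun u hu => ?_
      obtain ⟨hu0, hu1⟩ := (hmemFs' u).mp (by rw [hFs'def] at *; exact hu)
      rw [hAu u hu0 hu1, hBu u hu0 hu1]
  have hinvreindex : ∀ g : F → ℂ, ∑ u ∈ Fs', g u = ∑ v ∈ Fs', g v⁻¹ := by
    intro g
    apply Finset.sum_nbij' (i := fun u : F => u⁻¹) (j := fun v : F => v⁻¹)
    · intro u hu
      obtain ⟨hu0, hu1⟩ := (hmemFs' u).mp hu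
      exact (hmemFs' _).mpr ⟨inv_ne_zero hu0, fun h => hu1 (by rw [← inv_inv u, h, inv_one])⟩
    · intro v hv
      obtain ⟨hv0, hv1⟩ := (hmemFs' v).mp hv
      exact (hmemFs' _).mpr ⟨inv_ne_zero hv0, fun h => hv1 (by rw [← inv_inv v, h, inv_one])⟩
    · intro u _; simp
    · intro v _; simp
    · intro u _; rw [inv_inv]
  have hfinal : ∀ v : F, v ≠ 0 → v ≠ 1 →
      (n : ℂ) * (χ (v⁻¹)⁻¹ ^ b.val * χ v⁻¹ ^ c.val) *
        ((χ (1 + v⁻¹) ^ b.val * Y (-b)) * (χ ((1 + (v⁻¹)⁻¹)⁻¹) ^ (a - c).val * Y (a - c)))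
      = (n : ℂ) * Y (-b) * Y (a - c) * χ (v ^ (-c).val * (v + 1) ^ (b + c - a).val) := by
    intro v hv0 hv1
    have hv10 : (1 : F) + v ≠ 0 := h1add v hv1
    have hvadd : v + 1 ≠ 0 := by rwa [add_comm]
    rw [inv_inv]
    have hrhs : χ (v ^ (-c).val * (v + 1) ^ (b + c - a).val)
        = χ v ^ (-c).val * χ (v + 1) ^ (b + c - a).val := by
      rw [hχmul _ _ (pow_ne_zero _ hv0) (pow_ne_zero _ hvadd), hχpow v hv0, hχpow _ hvadd]
    have hsplitv : (1 : F) + v⁻¹ = v⁻¹ * (1 + v) := by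
      rw [mul_add, mul_one, inv_mul_cancel₀ hv0]
      exact add_comm 1 v⁻¹
    have e1 : χ (1 + v⁻¹) ^ b.val = χ v⁻¹ ^ b.val * χ (1 + v) ^ b.val := by
      rw [hsplitv, hχmul _ _ (inv_ne_zero hv0) hv10, mul_pow]
    have e2 : χ ((1 + v)⁻¹) ^ (a - c).val = χ (1 + v) ^ (-(a - c)).val := hEinv _ hv10 _
    have e3 : χ v⁻¹ ^ c.val = χ v ^ (-c).val := hEinv _ hv0 _
    have e4 : χ v⁻¹ ^ b.val = χ v ^ (-b).val := hEinv _ hv0 _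
    have e5 : χ v ^ b.val * χ v ^ (-b).val = 1 := by
      rw [← pow_val_add' (hχn v hv0), add_neg_cancel, ZMod.val_zero, pow_zero]
    have e6 : χ (1 + v) ^ b.val * χ (1 + v) ^ (-(a - c)).val = χ (v + 1) ^ (b + c - a).val := by
      rw [← pow_val_add' (hχn _ hv10), add_comm v 1,
        show b + -(a - c) = b + c - a by ring]
    rw [e1, e2, e3, e4, hrhs]
    linear_combination (↑n * χ v ^ (-c).val * Y (-b) * Y (a - c) *
        (χ (1 + v) ^ b.val * χ (1 + v) ^ (-(a - c)).val)) * e5 +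
      (↑n * χ v ^ (-c).val * Y (-b) * Y (a - c)) * e6
  have hS5 : (∑ u ∈ Fs', (n : ℂ) * (χ u⁻¹ ^ b.val * χ u ^ c.val) *
          ((χ (1 + u) ^ b.val * Y (-b)) * (χ ((1 + u⁻¹)⁻¹) ^ (a - c).val * Y (a - c))))
      = ((n : ℂ) * Y (-b) * Y (a - c)) *
          ∑ v ∈ Fs', χ (v ^ (-c).val * (v + 1) ^ (b + c - a).val) := by
    rw [hinvreindex (fun u => (n : ℂ) * (χ u⁻¹ ^ b.val * χ u ^ c.val) *
          ((χ (1 + u) ^ b.val * Y (-b)) * (χ ((1 + u⁻¹)⁻¹) ^ (a - c).val * Y (a - c)))),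
      Finset.mul_sum]
    refine Finset.sum_congr rfl fun v hv => ?_
    obtain ⟨hv0, hv1⟩ := (hmemFs' v).mp hv
    exact hfinal v hv0 hv1
  rw [hS3, hS4, hsplit, hS5, hFs']
  split_ifs with hb hac hac <;> field_simp <;> ring
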